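/- Fix integers n ≥ 2 and d ≥ 1 and reals R > 0 and T > 0. Let σ₁, …, σ_d be permutations of Fin n (one per configured topology of out-degree 1) and let S₁, …, S_d be finite sets of positive integers (the hop counts used on each topology). Suppose that for some fixed node x, every node y ≠ x satisfies y = σᵢʰ(x) for some index i and some h ∈ Sᵢ (i.e., the strategy delivers x's data to every other node, where taking h hops on topology i reaches σᵢʰ(x)). Then the total completion time satisfies d·R + T·(∑_{i=1}^{d} ∑_{h ∈ Sᵢ} h) ≥ d·R + T·(d·q(q+1)/2 + u·(q+1)), where q = ⌊(n−1)/d⌋ and u = (n−1) mod d. -/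

import Mathlib

/-- **Lower bound on total completion time for degree-1 strategies.**
Fix `n ≥ 2`, `d ≥ 1`, reals `R > 0`, `T > 0`. Given `d` permutations of `Fin n`
(one per topology) and hop-count sets `S i` of positive integers, if the strategy
delivers `x`'s data to every other node (every `y ≠ x` equals `(σ i)^h x` for some
`i` and `h ∈ S i`), then
`d·R + T·∑ᵢ ∑_{h ∈ Sᵢ} h ≥ d·R + T·(d·q(q+1)/2 + u·(q+1))`
where `q = ⌊(n−1)/d⌋` and `u = (n−1) mod d`. -/
theorem total_cost_lower_bound
    (n d : ℕ) (hn : 2 ≤ n) (hd : 1 ≤ d)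
    (R T : ℝ) (hR : 0 < R) (hT : 0 < T)
    (σ : Fin d → Equiv.Perm (Fin n))
    (S : Fin d → Finset ℕ) (hS : ∀ i, 0 ∉ S i)
    (x : Fin n)
    (hcover : ∀ y : Fin n, y ≠ x → ∃ i : Fin d, ∃ h ∈ S i, y = ((σ i) ^ h) x) :
    (d : ℝ) * R + T * (∑ i : Fin d, ∑ h ∈ S i, (h : ℝ)) ≥
      (d : ℝ) * R +
        T * ((d * (((n - 1) / d) * ((n - 1) / d + 1) / 2) +
          ((n - 1) % d) * ((n - 1) / d + 1) : ℕ) : ℝ) := by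
  set q : ℕ := (n - 1) / d with hqdef
  set u : ℕ := (n - 1) % d with hudef
  set K : ℕ := d * (q * (q + 1) / 2) + u * (q + 1) with hKdef
  -- Step 1: the sets cover at least n - 1 nodes
  have hA : n - 1 ≤ ∑ i, (S i).card := by
    have hsub : ({x}ᶜ : Finset (Fin n)) ⊆
        Finset.univ.biUnion (fun i => (S i).image (fun h => ((σ i) ^ h) x)) := by
      intro y hy
      simp only [Finset.mem_compl, Finset.mem_singleton] at hy
      obtain ⟨i, h, hh, hy⟩ := hcover y hy
      simp only [Finset.mem_biUnion, Finset.mem_image]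
      exact ⟨i, Finset.mem_univ i, h, hh, hy.symm⟩
    calc n - 1 = ({x}ᶜ : Finset (Fin n)).card := by
          simp [Finset.card_compl]
      _ ≤ _ := Finset.card_le_card hsub
      _ ≤ ∑ i, ((S i).image (fun h => ((σ i) ^ h) x)).card := Finset.card_biUnion_le
      _ ≤ ∑ i, (S i).card := Finset.sum_le_sum fun i _ => Finset.card_image_le
  -- Step 2: per topology, at most t hops values are ≤ t
  have hfilt : ∀ (i : Fin d) (t : ℕ),
      (S i).card ≤ t + ((S i).filter (fun h => t < h)).card := by
    intro i t
    have hsplit := Finset.card_filter_add_card_filter_not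
      (s := S i) (p := fun h => t < h)
    have hle : ((S i).filter (fun h => ¬ t < h)).card ≤ t := by
      have hsub2 : (S i).filter (fun h => ¬ t < h) ⊆ Finset.Icc 1 t := by
        intro h hh
        simp only [Finset.mem_filter, not_lt] at hh
        exact Finset.mem_Icc.mpr
          ⟨Nat.one_le_iff_ne_zero.mpr (fun h0 => hS i (h0 ▸ hh.1)), hh.2⟩
      calc ((S i).filter (fun h => ¬ t < h)).card ≤ (Finset.Icc 1 t).card :=
            Finset.card_le_card hsub2
        _ = t := by simp [Nat.card_Icc]
    omega
  -- Step 3: double counting per topology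
  have hC : ∀ i : Fin d,
      ∑ t ∈ Finset.range (q + 1), ((S i).filter (fun h => t < h)).card
        ≤ ∑ h ∈ S i, h := by
    intro i
    calc ∑ t ∈ Finset.range (q + 1), ((S i).filter (fun h => t < h)).card
        = ∑ t ∈ Finset.range (q + 1), ∑ h ∈ S i, if t < h then 1 else 0 := by
          exact Finset.sum_congr rfl fun t _ => Finset.card_filter _ _
      _ = ∑ h ∈ S i, ∑ t ∈ Finset.range (q + 1), if t < h then 1 else 0 :=
          Finset.sum_comm
      _ ≤ ∑ h ∈ S i, h := by
          apply Finset.sum_le_sum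
          intro h _
          calc (∑ t ∈ Finset.range (q + 1), if t < h then 1 else 0)
              = ((Finset.range (q + 1)).filter (fun t => t < h)).card :=
                (Finset.card_filter _ _).symm
            _ ≤ (Finset.range h).card := by
                apply Finset.card_le_card
                intro t ht
                simp only [Finset.mem_filter, Finset.mem_range] at ht ⊢
                exact ht.2
            _ = h := Finset.card_range h
  -- Step 4: closed form for the sum of the pointwise lower bounds
  have hq : d * q + u = n - 1 := Nat.div_add_mod (n - 1) d
  have hD : K = ∑ t ∈ Finset.range (q + 1), (n - 1 - d * t) := by
    have hterm : ∀ t ∈ Finset.range (q + 1), n - 1 - d * t = d * (q - t) + u := by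
      intro t ht
      have ht' : t ≤ q := Nat.lt_succ_iff.mp (Finset.mem_range.mp ht)
      have : d * t + d * (q - t) = d * q := by
        rw [← Nat.mul_add]
        congr 1
        omega
      omega
    rw [Finset.sum_congr rfl hterm, Finset.sum_add_distrib, ← Finset.mul_sum,
      Finset.sum_const, Finset.card_range]
    have hrefl : ∑ t ∈ Finset.range (q + 1), (q + 1 - 1 - t)
        = ∑ t ∈ Finset.range (q + 1), t := Finset.sum_range_reflect (fun j => j) (q + 1)
    simp only [Nat.add_sub_cancel] at hrefl
    have hgauss : ∑ t ∈ Finset.range (q + 1), t = q * (q + 1) / 2 := by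
      rw [Finset.sum_range_id]
      simp [Nat.mul_comm]
    rw [hrefl, hgauss, hKdef]
    ring
  -- Step 5: the natural-number inequality
  have key : K ≤ ∑ i, ∑ h ∈ S i, h := by
    have h1 : ∀ t ∈ Finset.range (q + 1),
        n - 1 - d * t ≤ ∑ i, ((S i).filter (fun h => t < h)).card := by
      intro t _
      have h2 : ∑ i, (S i).card
          ≤ ∑ i : Fin d, (t + ((S i).filter (fun h => t < h)).card) :=
        Finset.sum_le_sum fun i _ => hfilt i t
      rw [Finset.sum_add_distrib, Finset.sum_const, Finset.card_univ,
        Fintype.card_fin, smul_eq_mul] at h2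
      omega
    calc K = ∑ t ∈ Finset.range (q + 1), (n - 1 - d * t) := hD
      _ ≤ ∑ t ∈ Finset.range (q + 1), ∑ i, ((S i).filter (fun h => t < h)).card :=
          Finset.sum_le_sum h1
      _ = ∑ i, ∑ t ∈ Finset.range (q + 1), ((S i).filter (fun h => t < h)).card :=
          Finset.sum_comm
      _ ≤ ∑ i, ∑ h ∈ S i, h := Finset.sum_le_sum fun i _ => hC i
  -- Step 6: transfer to the reals
  have hcast : ((K : ℕ) : ℝ) ≤ ∑ i : Fin d, ∑ h ∈ S i, (h : ℝ) := by
    have : ((∑ i, ∑ h ∈ S i, h : ℕ) : ℝ) = ∑ i : Fin d, ∑ h ∈ S i, (h : ℝ) := by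
      push_cast
      rfl
    rw [← this]
    exact_mod_cast key
  have : T * ((K : ℕ) : ℝ) ≤ T * (∑ i : Fin d, ∑ h ∈ S i, (h : ℝ)) :=
    mul_le_mul_of_nonneg_left hcast hT.le
  exact add_le_add_right this _
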